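/- Let G be a finite simple graph that is VD_k for an integer k ≥ 0. Then every independent set of G with at most k vertices is contained in an independent set of G with exactly k vertices (equivalently, the (k−1)-skeleton of the independence complex Ind(G) is pure (k−1)-dimensional). -/

import Mathlib

/-- The closed neighborhood `N•(v) = N(v) ∪ {v}` of a vertex, as a `Finset`. -/
def SimpleGraph.closedNbhdFinset {V : Type*} [Fintype V] [DecidableEq V] (G : SimpleGraph V)
    [DecidableRel G.Adj] (v : V) : Finset V :=
  insert v (G.neighborFinset v)

/-- `VD G s k` means that the induced subgraph of `G` on the vertex set `s` has the
graph property `VD_k`: every (induced sub)graph is `VD_0`; a graph with exactly `k`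
vertices and no edges is `VD_k`; and if there is a vertex `v` such that deleting `v`
yields a `VD_k` graph and deleting the closed neighborhood of `v` yields a `VD_{k-1}`
graph, then the graph is `VD_k`. -/
inductive SimpleGraph.VD {V : Type*} [Fintype V] [DecidableEq V] (G : SimpleGraph V)
    [DecidableRel G.Adj] : Finset V → ℕ → Prop
  | zero (s : Finset V) : SimpleGraph.VD G s 0
  | edgeless (s : Finset V) (k : ℕ) (hcard : s.card = k)
      (h : ∀ u ∈ s, ∀ w ∈ s, ¬ G.Adj u w) : SimpleGraph.VD G s k
  | step (s : Finset V) (k : ℕ) (v : V) (hv : v ∈ s)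
      (hdel : SimpleGraph.VD G (s.erase v) (k + 1))
      (hnbr : SimpleGraph.VD G (s \ G.closedNbhdFinset v) k) : SimpleGraph.VD G s (k + 1)


lemma vd_aux {V : Type*} [Fintype V] [DecidableEq V] (G : SimpleGraph V)
    [DecidableRel G.Adj] {A : Finset V} {k : ℕ} (h : G.VD A k) :
    ∀ s : Finset V, s ⊆ A → (∀ u ∈ s, ∀ w ∈ s, ¬ G.Adj u w) → s.card ≤ k →
    ∃ t : Finset V, s ⊆ t ∧ t ⊆ A ∧ (∀ u ∈ t, ∀ w ∈ t, ¬ G.Adj u w) ∧ t.card = k := by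
  induction h with
  | zero A =>
    intro s hsA hind hc
    refine ⟨∅, ?_, Finset.empty_subset _, by simp, rfl⟩
    have : s = ∅ := Finset.card_eq_zero.1 (Nat.le_zero.1 hc)
    simp [this]
  | edgeless A k hcard hind =>
    intro s hsA _ _
    exact ⟨A, hsA, Finset.Subset.refl _, hind, hcard⟩
  | step A k v hv hdel hnbr ih1 ih2 =>
    intro s hsA hind hc
    by_cases hvs : v ∈ s
    · have hsub : s.erase v ⊆ A \ G.closedNbhdFinset v := by
        intro u hu
        have huv : u ≠ v := Finset.ne_of_mem_erase hu
        have hus : u ∈ s := Finset.mem_of_mem_erase hu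
        rw [Finset.mem_sdiff]
        refine ⟨hsA hus, ?_⟩
        simp only [SimpleGraph.closedNbhdFinset, Finset.mem_insert,
          SimpleGraph.mem_neighborFinset]
        push_neg
        exact ⟨huv, fun hadj => hind v hvs u hus hadj⟩
      have hc' : (s.erase v).card ≤ k := by
        have := Finset.card_erase_of_mem hvs
        omega
      obtain ⟨t, hst, htA, htind, htc⟩ := ih2 (s.erase v)
        hsub (fun u hu w hw => hind u (Finset.mem_of_mem_erase hu) w (Finset.mem_of_mem_erase hw)) hc'
      have hvt : v ∉ t := fun hvt => by
        have := htA hvt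
        rw [Finset.mem_sdiff] at this
        exact this.2 (by simp [SimpleGraph.closedNbhdFinset])
      refine ⟨insert v t, ?_, ?_, ?_, ?_⟩
      · intro u hu
        rcases eq_or_ne u v with rfl | hne
        · exact Finset.mem_insert_self _ _
        · exact Finset.mem_insert_of_mem (hst (Finset.mem_erase.2 ⟨hne, hu⟩))
      · intro u hu
        rcases Finset.mem_insert.1 hu with rfl | hu
        · exact hv
        · exact (Finset.mem_sdiff.1 (htA hu)).1
      · intro u hu w hw
        have hnadjv : ∀ x ∈ t, ¬ G.Adj v x := by
          intro x hx hadj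
          have := (Finset.mem_sdiff.1 (htA hx)).2
          exact this (by simp [SimpleGraph.closedNbhdFinset, SimpleGraph.mem_neighborFinset, hadj])
        intro hadj
        rcases Finset.mem_insert.1 hu with rfl | hu
        · rcases Finset.mem_insert.1 hw with rfl | hw
          · exact G.loopless.irrefl _ hadj
          · exact hnadjv _ hw hadj
        · rcases Finset.mem_insert.1 hw with heq | hw
          · exact hnadjv _ hu (heq ▸ hadj).symm
          · exact htind u hu w hw hadj
      · rw [Finset.card_insert_of_notMem hvt, htc]
    · have hsub : s ⊆ A.erase v := fun u hu =>
        Finset.mem_erase.2 ⟨fun he => hvs (he ▸ hu), hsA hu⟩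
      obtain ⟨t, hst, htA, htind, htc⟩ := ih1 s hsub hind hc
      exact ⟨t, hst, fun u hu => Finset.mem_of_mem_erase (htA hu), htind, htc⟩


/-- If `G` is `VD_k`, then every independent set of `G` with at most `k` vertices extends
to an independent set with exactly `k` vertices (purity of the `(k-1)`-skeleton of the
independence complex). -/
theorem independent_extends_of_vd {V : Type*} [Fintype V] [DecidableEq V] (G : SimpleGraph V)
    [DecidableRel G.Adj] (k : ℕ) (h : G.VD Finset.univ k)
    (s : Finset V) (hs : ∀ u ∈ s, ∀ w ∈ s, ¬ G.Adj u w) (hcard : s.card ≤ k) :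
    ∃ t : Finset V, s ⊆ t ∧ (∀ u ∈ t, ∀ w ∈ t, ¬ G.Adj u w) ∧ t.card = k := by
  obtain ⟨t, hst, _, htind, htc⟩ := vd_aux G h s (Finset.subset_univ s) hs hcard
  exact ⟨t, hst, htind, htc⟩
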